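/- Fix N ≥ 2, weights w₁,…,w_N > 0 with Σᵢ wᵢ = 1, and 0 < χ < 1. Let V : ℝ → ℝ be continuous and coercive (V(x) → +∞ as |x| → ∞), and assume the function x ↦ inf_{y∈ℝ} (w₁ V(y) + w_N V(x + y)) − log|x| is coercive on ℝ. Then the discrete Keller–Segel energy Ẽ_N attains a global minimum on the open set U = {x ∈ ℝ^N : x₁ < x₂ < ⋯ < x_N}; that is, there exists x* ∈ U such that Ẽ_N(x*) ≤ Ẽ_N(x) for all x ∈ U. -/

import Mathlib

open Real Finset Filter

/-- `rᵢ = min(Δxᵢ, Δxᵢ₊₁)` with the convention `Δx₁ = Δx_{N+1} = +∞`, for `N = n + 2`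
particles indexed from `0` to `n+1`. -/
noncomputable def rball (n : ℕ) (x : Fin (n + 2) → ℝ) (i : Fin (n + 2)) : ℝ :=
  if i.val = 0 then x 1 - x 0
  else if i.val = n + 1 then x i - x (i - 1)
  else min (x i - x (i - 1)) (x (i + 1) - x i)

lemma KSaux.sub_one_lt {n : ℕ} {i : Fin (n + 2)} (h : i.val ≠ 0) : i - 1 < i := by
  rw [Fin.lt_def, Fin.coe_sub_one]
  simp only [Fin.ext_iff, Fin.val_zero, h, if_false]
  omega

lemma KSaux.lt_add_one {n : ℕ} {i : Fin (n + 2)} (h : i.val ≠ n + 1) : i < i + 1 := by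
  have hlt : i < Fin.last (n + 1) := by
    rw [Fin.lt_def, Fin.val_last]; omega
  rw [Fin.lt_def, Fin.val_add_one_of_lt hlt]; omega

lemma rball_pos {n : ℕ} {x : Fin (n + 2) → ℝ} (hx : StrictMono x) (i : Fin (n + 2)) :
    0 < rball n x i := by
  unfold rball
  split_ifs with h0 h1
  · have : (0 : Fin (n + 2)) < 1 := by rw [Fin.lt_def]; simp
    simpa using hx this
  · simpa using hx (KSaux.sub_one_lt h0)
  · exact lt_min (by simpa using hx (KSaux.sub_one_lt h0))
      (by simpa using hx (KSaux.lt_add_one h1))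

lemma rball_le_left {n : ℕ} {x : Fin (n + 2) → ℝ} (hx : StrictMono x)
    {i j : Fin (n + 2)} (hij : i < j) : rball n x i ≤ x j - x i := by
  unfold rball
  split_ifs with h0 h1
  · have hi : i = 0 := by rwa [Fin.ext_iff]
    subst hi
    have h1j : (1 : Fin (n + 2)) ≤ j := by
      rw [Fin.le_def]
      have := hij; rw [Fin.lt_def] at this
      simp only [Fin.val_zero, Fin.val_one] at this ⊢; omega
    have := hx.monotone h1j
    simpa using by linarith [hx.monotone h1j]
  · exfalso
    have := hij; rw [Fin.lt_def] at this
    have hj := j.isLt; omega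
  · refine (min_le_right _ _).trans ?_
    have hlt : i < Fin.last (n + 1) := by rw [Fin.lt_def, Fin.val_last]; omega
    have hle : i + 1 ≤ j := by
      rw [Fin.le_def, Fin.val_add_one_of_lt hlt]
      have := hij; rw [Fin.lt_def] at this; omega
    linarith [hx.monotone hle]

lemma rball_le_right {n : ℕ} {x : Fin (n + 2) → ℝ} (hx : StrictMono x)
    {i j : Fin (n + 2)} (hij : i < j) : rball n x j ≤ x j - x i := by
  have hj0 : j.val ≠ 0 := by
    have := hij; rw [Fin.lt_def] at this; omega
  have key : x (j - 1) ≥ x i := by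
    apply hx.monotone
    rw [Fin.le_def, Fin.coe_sub_one]
    simp only [Fin.ext_iff, Fin.val_zero, hj0, if_false]
    have := hij; rw [Fin.lt_def] at this; omega
  unfold rball
  split_ifs with h0 h1
  · omega
  · linarith
  · refine (min_le_left _ _).trans ?_; linarith

lemma rball_le_abs {n : ℕ} {x : Fin (n + 2) → ℝ} (hx : StrictMono x)
    {i j : Fin (n + 2)} (hij : i ≠ j) : rball n x i ≤ |x i - x j| := by
  rcases lt_or_gt_of_ne hij with h | h
  · rw [abs_sub_comm, abs_of_pos (by linarith [hx h])]
    exact rball_le_left hx h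
  · rw [abs_of_pos (by linarith [hx h])]
    exact rball_le_right hx h

lemma rball_le_diam {n : ℕ} {x : Fin (n + 2) → ℝ} (hx : StrictMono x) (i : Fin (n + 2)) :
    rball n x i ≤ x (Fin.last (n + 1)) - x 0 := by
  rcases eq_or_lt_of_le (Fin.le_last i) with h | h
  · subst h
    have h0 : (0 : Fin (n+2)) < Fin.last (n+1) := by rw [Fin.lt_def]; simp
    exact rball_le_right hx h0
  · have := rball_le_left hx h
    have h0 : x 0 ≤ x i := hx.monotone (Fin.zero_le i)
    linarith

/-- The one-dimensional discrete modified Keller–Segel energy with confinement `V` and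
chemosensitivity `χ`:
`Ẽ_N(x) = Σᵢ wᵢ log(wᵢ/rᵢ) + Σᵢ wᵢ V(xᵢ) + χ Σᵢ Σ_{j≠i} wᵢwⱼ log|xᵢ − xⱼ|`. -/
noncomputable def kellerSegelEnergy (n : ℕ) (w : Fin (n + 2) → ℝ) (V : ℝ → ℝ) (χ : ℝ)
    (x : Fin (n + 2) → ℝ) : ℝ :=
  ∑ i, w i * Real.log (w i / rball n x i) + ∑ i, w i * V (x i) +
    χ * ∑ i, ∑ j ∈ Finset.univ.erase i, w i * w j * Real.log |x i - x j|

/-- interaction lower bound -/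
lemma KSaux.interaction_ge {n : ℕ} {w : Fin (n + 2) → ℝ} (hw : ∀ i, 0 < w i)
    (hw1 : ∑ i, w i = 1) {x : Fin (n + 2) → ℝ} (hx : StrictMono x) :
    ∑ i, w i * (1 - w i) * Real.log (rball n x i) ≤
      ∑ i, ∑ j ∈ Finset.univ.erase i, w i * w j * Real.log |x i - x j| := by
  have hr := rball_pos hx
  calc ∑ i, w i * (1 - w i) * Real.log (rball n x i)
      = ∑ i, ∑ j ∈ Finset.univ.erase i,
          w i * w j * ((Real.log (rball n x i) + Real.log (rball n x j)) / 2) := by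
        have swap : ∑ i, ∑ j ∈ Finset.univ.erase i, w i * w j * Real.log (rball n x j)
            = ∑ j, ∑ i ∈ Finset.univ.erase j, w i * w j * Real.log (rball n x j) := by
          apply Finset.sum_comm'
          intro i j
          simp [Finset.mem_erase, eq_comm, and_comm, ne_comm]
        have h1 : ∀ i : Fin (n+2), ∑ j ∈ Finset.univ.erase i, w i * w j * Real.log (rball n x i)
            = w i * (1 - w i) * Real.log (rball n x i) := by
          intro i
          rw [← Finset.sum_mul, ← Finset.mul_sum,
            Finset.sum_erase_eq_sub (Finset.mem_univ i), hw1]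
        have h2 : ∀ j : Fin (n+2), ∑ i ∈ Finset.univ.erase j, w i * w j * Real.log (rball n x j)
            = w j * (1 - w j) * Real.log (rball n x j) := by
          intro j
          rw [← Finset.sum_mul, ← Finset.sum_mul,
            Finset.sum_erase_eq_sub (Finset.mem_univ j), hw1]
          ring
        have expand : ∀ i : Fin (n+2), ∀ j ∈ Finset.univ.erase i,
            w i * w j * ((Real.log (rball n x i) + Real.log (rball n x j)) / 2)
            = (w i * w j * Real.log (rball n x i)) / 2
              + (w i * w j * Real.log (rball n x j)) / 2 := by
          intro i j _; ring
        rw [Finset.sum_congr rfl fun i _ => Finset.sum_congr rfl (expand i)]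
        simp only [Finset.sum_add_distrib, ← Finset.sum_div]
        rw [swap, Finset.sum_congr rfl fun i _ => h1 i,
          Finset.sum_congr rfl fun j _ => h2 j]
        ring
    _ ≤ ∑ i, ∑ j ∈ Finset.univ.erase i, w i * w j * Real.log |x i - x j| := by
        apply Finset.sum_le_sum
        intro i _
        apply Finset.sum_le_sum
        intro j hj
        have hij : j ≠ i := (Finset.mem_erase.mp hj).1
        have h1 : Real.log (rball n x i) ≤ Real.log |x i - x j| :=
          Real.log_le_log (hr i) (rball_le_abs hx (Ne.symm hij))
        have h2 : Real.log (rball n x j) ≤ Real.log |x i - x j| := by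
          rw [abs_sub_comm]
          exact Real.log_le_log (hr j) (rball_le_abs hx hij)
        have : (Real.log (rball n x i) + Real.log (rball n x j)) / 2
            ≤ Real.log |x i - x j| := by linarith
        exact mul_le_mul_of_nonneg_left this (mul_pos (hw i) (hw j)).le

/-- master coercivity bound:
`E(x) ≥ Σ wᵢ log wᵢ − Σ aᵢ log rᵢ + Σ wᵢ V(xᵢ)` with `aᵢ = wᵢ(1−χ(1−wᵢ))`. -/
lemma KSaux.master {n : ℕ} {w : Fin (n + 2) → ℝ} (hw : ∀ i, 0 < w i)
    (hw1 : ∑ i, w i = 1) {χ : ℝ} (hχ0 : 0 < χ) {V : ℝ → ℝ}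
    {x : Fin (n + 2) → ℝ} (hx : StrictMono x) :
    ∑ i, w i * Real.log (w i)
      - ∑ i, (w i * (1 - χ * (1 - w i))) * Real.log (rball n x i)
      + ∑ i, w i * V (x i) ≤ kellerSegelEnergy n w V χ x := by
  have hr := rball_pos hx
  have hlogdiv : ∀ i : Fin (n+2), w i * Real.log (w i / rball n x i)
      = w i * Real.log (w i) - w i * Real.log (rball n x i) := by
    intro i
    rw [Real.log_div (hw i).ne' (hr i).ne']
    ring
  have hint := KSaux.interaction_ge hw hw1 hx
  have hint' : χ * ∑ i, w i * (1 - w i) * Real.log (rball n x i) ≤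
      χ * ∑ i, ∑ j ∈ Finset.univ.erase i, w i * w j * Real.log |x i - x j| :=
    mul_le_mul_of_nonneg_left hint hχ0.le
  unfold kellerSegelEnergy
  rw [Finset.sum_congr rfl fun i _ => hlogdiv i, Finset.sum_sub_distrib]
  have : ∑ i, (w i * (1 - χ * (1 - w i))) * Real.log (rball n x i)
      = ∑ i, w i * Real.log (rball n x i)
        - χ * ∑ i, w i * (1 - w i) * Real.log (rball n x i) := by
    rw [Finset.mul_sum, ← Finset.sum_sub_distrib]
    apply Finset.sum_congr rfl
    intro i _
    ring
  rw [this]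
  linarith

lemma KSaux.rball_continuous (n : ℕ) (i : Fin (n + 2)) :
    Continuous fun x : Fin (n + 2) → ℝ => rball n x i := by
  unfold rball
  split_ifs <;> fun_prop

lemma KSaux.continuousAt_sum {ι X : Type*} [TopologicalSpace X] (s : Finset ι)
    {f : ι → X → ℝ} {x : X} (h : ∀ i ∈ s, ContinuousAt (f i) x) :
    ContinuousAt (fun y => ∑ i ∈ s, f i y) x :=
  tendsto_finset_sum s h

lemma KSaux.energy_continuousAt {n : ℕ} (w : Fin (n + 2) → ℝ) (hw : ∀ i, 0 < w i)
    (V : ℝ → ℝ) (hVcont : Continuous V) (χ : ℝ)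
    {x : Fin (n + 2) → ℝ} (hx : StrictMono x) :
    ContinuousAt (kellerSegelEnergy n w V χ) x := by
  have hr := rball_pos hx
  unfold kellerSegelEnergy
  apply ContinuousAt.add
  apply ContinuousAt.add
  · apply KSaux.continuousAt_sum _
    intro i _
    apply ContinuousAt.mul continuousAt_const
    have h1 : ContinuousAt (fun y : Fin (n+2) → ℝ => w i / rball n y i) x := by
      apply ContinuousAt.div continuousAt_const (KSaux.rball_continuous n i).continuousAt
      exact (hr i).ne'
    exact h1.log (div_pos (hw i) (hr i)).ne'
  · apply KSaux.continuousAt_sum _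
    intro i _
    exact ContinuousAt.mul continuousAt_const
      (hVcont.continuousAt.comp (continuous_apply i).continuousAt)
  · apply ContinuousAt.mul continuousAt_const
    apply KSaux.continuousAt_sum _
    intro i _
    apply KSaux.continuousAt_sum _
    intro j hj
    apply ContinuousAt.mul continuousAt_const
    have hne : x i - x j ≠ 0 := by
      rcases lt_or_gt_of_ne (Finset.mem_erase.mp hj).1.symm with h | h
      · have := hx h; linarith
      · have := hx h; linarith
    have h1 : ContinuousAt (fun y : Fin (n+2) → ℝ => |y i - y j|) x := by fun_prop
    exact h1.log (by simpa using abs_ne_zero.mpr hne)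

/-- for `N ≥ 2`, positive weights summing to one, `0 < χ < 1`, `V`
continuous and coercive with `x ↦ inf_y (w₁V(y) + w_N V(x+y)) − log|x|` coercive, the
discrete Keller–Segel energy attains a global minimum on the open set of strictly
increasing configurations. -/
theorem kellerSegel_exists_minimiser (n : ℕ) (w : Fin (n + 2) → ℝ)
    (hw : ∀ i, 0 < w i) (hw1 : ∑ i, w i = 1) (χ : ℝ) (hχ0 : 0 < χ) (hχ1 : χ < 1)
    (V : ℝ → ℝ) (hVcont : Continuous V)
    (hVcoer : Tendsto V (cocompact ℝ) atTop)
    (hVW : Tendsto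
      (fun t : ℝ => (⨅ y : ℝ, (w 0 * V y + w (Fin.last (n + 1)) * V (t + y))) -
        Real.log |t|) (cocompact ℝ) atTop) :
    ∃ xstar : Fin (n + 2) → ℝ, StrictMono xstar ∧
      ∀ x : Fin (n + 2) → ℝ, StrictMono x →
        kellerSegelEnergy n w V χ xstar ≤ kellerSegelEnergy n w V χ x := by
  classical
  set E := kellerSegelEnergy n w V χ with hEdef
  set lst : Fin (n + 2) := Fin.last (n + 1) with hlst
  have h0lst : (0 : Fin (n + 2)) < lst := by rw [Fin.lt_def, hlst]; simp
  have hwlt1 : ∀ i, w i < 1 := by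
    intro i
    obtain ⟨j, hj⟩ : ∃ j, j ≠ i := by
      rcases eq_or_ne i 0 with h | h
      · exact ⟨lst, by rw [h]; exact ne_of_gt h0lst⟩
      · exact ⟨0, Ne.symm h⟩
    calc w i < ∑ k, w k := Finset.single_lt_sum hj (Finset.mem_univ i)
          (Finset.mem_univ j) (hw j) (fun k _ _ => (hw k).le)
    _ = 1 := hw1
  set a : Fin (n + 2) → ℝ := fun i => w i * (1 - χ * (1 - w i)) with hadef
  have hapos : ∀ i, 0 < a i := by
    intro i
    have h1 := hw i; have h2 := hwlt1 i
    have h3 : χ * (1 - w i) < 1 := by nlinarith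
    have h4 : 0 < 1 - χ * (1 - w i) := by linarith
    exact mul_pos (hw i) h4
  have haw : ∀ i, a i < w i := by
    intro i
    have h1 := hw i; have h2 := hwlt1 i
    simp only [hadef]
    have h3 : 0 < w i * (χ * (1 - w i)) := mul_pos h1 (mul_pos hχ0 (by linarith))
    nlinarith [h3]
  set A : ℝ := ∑ i, a i with hAdef
  have hA1 : A < 1 := by
    calc A < ∑ i, w i := Finset.sum_lt_sum_of_nonempty Finset.univ_nonempty
          (fun i _ => haw i)
    _ = 1 := hw1
  have hA0 : 0 < A := Finset.sum_pos (fun i _ => hapos i) Finset.univ_nonempty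
  set Cw : ℝ := ∑ i, w i * Real.log (w i) with hCwdef
  obtain ⟨M, hM0, hMb⟩ : ∃ M : ℝ, 0 ≤ M ∧ ∀ t, -M ≤ V t := by
    have h0 : {t : ℝ | 0 ≤ V t} ∈ cocompact ℝ := hVcoer.eventually (eventually_ge_atTop 0)
    obtain ⟨K, hK, hKs⟩ := mem_cocompact.mp h0
    obtain ⟨m, hm⟩ := (hK.image hVcont).bddBelow
    refine ⟨max (-m) 0, le_max_right _ _, fun t => ?_⟩
    by_cases ht : t ∈ K
    · have h1 : m ≤ V t := hm ⟨t, ht, rfl⟩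
      have h2 : -max (-m) 0 ≤ m := by have := le_max_left (-m) 0; linarith
      linarith
    · have h1 : 0 ≤ V t := hKs ht
      have h2 : -max (-m) 0 ≤ 0 := by have := le_max_right (-m) 0; linarith
      linarith
  have hVsum1 : ∀ x : Fin (n + 2) → ℝ, ∀ i : Fin (n + 2),
      w i * V (x i) - M ≤ ∑ j, w j * V (x j) := by
    intro x i
    rw [← Finset.sum_erase_add Finset.univ _ (Finset.mem_univ i)]
    have h2 : ∑ j ∈ Finset.univ.erase i, w j * (-M)
        ≤ ∑ j ∈ Finset.univ.erase i, w j * V (x j) :=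
      Finset.sum_le_sum fun j _ => mul_le_mul_of_nonneg_left (hMb (x j)) (hw j).le
    have h3 : ∑ j ∈ Finset.univ.erase i, w j * (-M) = (1 - w i) * (-M) := by
      rw [← Finset.sum_mul, Finset.sum_erase_eq_sub (Finset.mem_univ i), hw1]
    have h4 : -M ≤ (1 - w i) * (-M) := by nlinarith [hw i, hwlt1 i]
    linarith
  have hVsum2 : ∀ x : Fin (n + 2) → ℝ,
      w 0 * V (x 0) + w lst * V (x lst) - M ≤ ∑ j, w j * V (x j) := by
    intro x
    have hlmem : lst ∈ Finset.univ.erase (0 : Fin (n + 2)) :=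
      Finset.mem_erase.mpr ⟨ne_of_gt h0lst, Finset.mem_univ _⟩
    rw [← Finset.sum_erase_add Finset.univ _ (Finset.mem_univ (0 : Fin (n + 2))),
      ← Finset.sum_erase_add _ _ hlmem]
    have h5 : (0:ℝ) ≤ ∑ j ∈ (Finset.univ.erase 0).erase lst, w j :=
      Finset.sum_nonneg fun j _ => (hw j).le
    have h3 : ∑ j ∈ (Finset.univ.erase 0).erase lst, w j ≤ 1 := by
      rw [← hw1]
      exact Finset.sum_le_sum_of_subset_of_nonneg (fun j _ => Finset.mem_univ j)
        (fun j _ _ => (hw j).le)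
    have h2 : (∑ j ∈ (Finset.univ.erase 0).erase lst, w j) * (-M)
        ≤ ∑ j ∈ (Finset.univ.erase 0).erase lst, w j * V (x j) := by
      rw [Finset.sum_mul]
      exact Finset.sum_le_sum fun j _ => mul_le_mul_of_nonneg_left (hMb (x j)) (hw j).le
    have h4 : -M ≤ (∑ j ∈ (Finset.univ.erase 0).erase lst, w j) * (-M) := by nlinarith
    linarith
  set Φ : ℝ → ℝ := fun t => ⨅ y : ℝ, (w 0 * V y + w lst * V (t + y)) with hΦdef
  have hΦle : ∀ t y : ℝ, Φ t ≤ w 0 * V y + w lst * V (t + y) := by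
    intro t y
    apply ciInf_le
    refine ⟨w 0 * (-M) + w lst * (-M), ?_⟩
    rintro v ⟨z, rfl⟩
    have h1 := mul_le_mul_of_nonneg_left (hMb z) (hw 0).le
    have h2 := mul_le_mul_of_nonneg_left (hMb (t + z)) (hw lst).le
    dsimp only
    linarith
  have hx0 : StrictMono (fun i : Fin (n + 2) => (i.val : ℝ)) := by
    intro i j h
    dsimp only
    exact Nat.cast_lt.mpr (Fin.lt_def.mp h)
  set x0 : Fin (n + 2) → ℝ := fun i => (i.val : ℝ) with hx0def
  set c : ℝ := E x0 with hcdef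
  have hmaster : ∀ x : Fin (n + 2) → ℝ, StrictMono x →
      Cw - ∑ i, a i * Real.log (rball n x i) + ∑ i, w i * V (x i) ≤ E x := by
    intro x hx
    rw [hEdef, hCwdef]
    simp only [hadef]
    exact KSaux.master hw hw1 hχ0 hx
  have hψ : Tendsto (fun t : ℝ => Φ t - A * Real.log t) atTop atTop := by
    have hle : (atTop : Filter ℝ) ≤ cocompact ℝ := by
      rw [cocompact_eq_atBot_atTop]; exact le_sup_right
    have h1 : Tendsto (fun t : ℝ => Φ t - Real.log |t|) atTop atTop := by
      simp only [hΦdef, hlst]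
      exact hVW.mono_left hle
    have h2 : (fun t : ℝ => Φ t - Real.log |t|) =ᶠ[atTop]
        fun t => Φ t - Real.log t := by
      filter_upwards [eventually_gt_atTop (0 : ℝ)] with t ht
      rw [abs_of_pos ht]
    have h3 : Tendsto (fun t : ℝ => Φ t - Real.log t) atTop atTop := h1.congr' h2
    have h4 : Tendsto (fun t : ℝ => (1 - A) * Real.log t) atTop atTop :=
      Real.tendsto_log_atTop.const_mul_atTop (by linarith)
    have h5 := h3.atTop_add_atTop h4
    refine h5.congr fun t => ?_
    ring
  obtain ⟨R0, hR0⟩ := eventually_atTop.mp (hψ.eventually_gt_atTop (c - Cw + M))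
  set R1 : ℝ := max R0 1 with hR1def
  have hR1ge1 : (1 : ℝ) ≤ R1 := le_max_right _ _
  have hR1 : ∀ t, R1 ≤ t → c - Cw + M < Φ t - A * Real.log t := fun t ht =>
    hR0 t ((le_max_left _ _).trans ht)
  have hlogR1 : 0 ≤ Real.log R1 := Real.log_nonneg hR1ge1
  have hdiam : ∀ x : Fin (n + 2) → ℝ, StrictMono x → E x ≤ c → x lst - x 0 < R1 := by
    intro x hx hxc
    by_contra hcon
    push_neg at hcon
    have h1 : ∑ i, a i * Real.log (rball n x i) ≤ A * Real.log (x lst - x 0) := by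
      rw [hAdef, Finset.sum_mul]
      exact Finset.sum_le_sum fun i _ => mul_le_mul_of_nonneg_left
        (Real.log_le_log (rball_pos hx i) (rball_le_diam hx i)) (hapos i).le
    have h3 := hΦle (x lst - x 0) (x 0)
    have h4 : x lst - x 0 + x 0 = x lst := by ring
    rw [h4] at h3
    have h2 := hVsum2 x
    have h5 := hmaster x hx
    have h6 := hR1 _ hcon
    linarith
  have hrR1 : ∀ x : Fin (n + 2) → ℝ, StrictMono x → E x ≤ c → ∀ i,
      Real.log (rball n x i) ≤ Real.log R1 := by
    intro x hx hxc i
    apply Real.log_le_log (rball_pos hx i)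
    have h1 := rball_le_diam hx i
    have h2 := hdiam x hx hxc
    rw [← hlst] at h1
    linarith
  set B : ℝ := c - Cw + M + A * Real.log R1 with hBdef
  have hVsglobal : ∀ x : Fin (n + 2) → ℝ, -M ≤ ∑ j, w j * V (x j) := by
    intro x
    have h2 : ∑ j, w j * (-M) ≤ ∑ j, w j * V (x j) :=
      Finset.sum_le_sum fun j _ => mul_le_mul_of_nonneg_left (hMb (x j)) (hw j).le
    have h3 : ∑ j, w j * (-M) = -M := by rw [← Finset.sum_mul, hw1]; ring
    linarith
  have hkey1 : ∀ x : Fin (n + 2) → ℝ, StrictMono x → E x ≤ c → ∀ i,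
      -(a i * Real.log (rball n x i)) ≤ B := by
    intro x hx hxc i
    have h5 := hmaster x hx
    have hVs := hVsglobal x
    have hsum : ∑ j, a j * Real.log (rball n x j)
        ≤ a i * Real.log (rball n x i) + A * Real.log R1 := by
      rw [← Finset.sum_erase_add Finset.univ _ (Finset.mem_univ i)]
      have h1 : ∑ j ∈ Finset.univ.erase i, a j * Real.log (rball n x j)
          ≤ ∑ j ∈ Finset.univ.erase i, a j * Real.log R1 :=
        Finset.sum_le_sum fun j _ => mul_le_mul_of_nonneg_left (hrR1 x hx hxc j) (hapos j).le
      have h3 : ∑ j ∈ Finset.univ.erase i, a j ≤ A := by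
        rw [hAdef]
        exact Finset.sum_le_sum_of_subset_of_nonneg (fun j _ => Finset.mem_univ j)
          (fun j _ _ => (hapos j).le)
      have h2 : ∑ j ∈ Finset.univ.erase i, a j * Real.log R1 ≤ A * Real.log R1 := by
        rw [← Finset.sum_mul]
        exact mul_le_mul_of_nonneg_right h3 hlogR1
      linarith
    rw [hBdef]
    linarith
  have hkey2 : ∀ x : Fin (n + 2) → ℝ, StrictMono x → E x ≤ c → ∀ i,
      w i * V (x i) ≤ B := by
    intro x hx hxc i
    have h5 := hmaster x hx
    have hsum : ∑ j, a j * Real.log (rball n x j) ≤ A * Real.log R1 := by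
      calc ∑ j, a j * Real.log (rball n x j) ≤ ∑ j, a j * Real.log R1 :=
            Finset.sum_le_sum fun j _ =>
              mul_le_mul_of_nonneg_left (hrR1 x hx hxc j) (hapos j).le
      _ = A * Real.log R1 := by rw [← Finset.sum_mul, ← hAdef]
    have h6 := hVsum1 x i
    rw [hBdef]
    linarith
  obtain ⟨i0, -, hi0⟩ := Finset.exists_min_image Finset.univ a Finset.univ_nonempty
  set Q : ℝ := max B 0 / a i0 with hQdef
  have hQ0 : 0 ≤ Q := div_nonneg (le_max_right B 0) (hapos i0).le
  set ε : ℝ := Real.exp (-Q) with hεdef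
  have hε0 : 0 < ε := Real.exp_pos _
  have hrlow : ∀ x : Fin (n + 2) → ℝ, StrictMono x → E x ≤ c → ∀ i,
      ε ≤ rball n x i := by
    intro x hx hxc i
    have h1 := hkey1 x hx hxc i
    have hmax := le_max_left B 0
    have h3 : a i * (-(Real.log (rball n x i))) ≤ max B 0 := by nlinarith
    have h4 : -(Real.log (rball n x i)) ≤ max B 0 / a i := by
      rw [le_div_iff₀ (hapos i)]
      nlinarith
    have h5 : max B 0 / a i ≤ max B 0 / a i0 :=
      div_le_div_of_nonneg_left (le_max_right B 0) (hapos i0) (hi0 i (Finset.mem_univ i))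
    have h6 : -Q ≤ Real.log (rball n x i) := by rw [hQdef]; linarith
    calc ε = Real.exp (-Q) := rfl
    _ ≤ Real.exp (Real.log (rball n x i)) := Real.exp_le_exp.mpr h6
    _ = rball n x i := Real.exp_log (rball_pos hx i)
  obtain ⟨i1, -, hi1⟩ := Finset.exists_min_image Finset.univ w Finset.univ_nonempty
  set K0 : ℝ := max B 0 / w i1 with hK0def
  have hVxle : ∀ x : Fin (n + 2) → ℝ, StrictMono x → E x ≤ c → ∀ i,
      V (x i) ≤ K0 := by
    intro x hx hxc i
    have h1 := hkey2 x hx hxc i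
    have hmax := le_max_left B 0
    have h2 : V (x i) ≤ max B 0 / w i := by
      rw [le_div_iff₀ (hw i)]
      nlinarith
    have h3 : max B 0 / w i ≤ max B 0 / w i1 :=
      div_le_div_of_nonneg_left (le_max_right B 0) (hw i1) (hi1 i (Finset.mem_univ i))
    rw [hK0def]
    linarith
  obtain ⟨KC, hKC, hKCs⟩ := mem_cocompact.mp (hVcoer.eventually (eventually_gt_atTop K0))
  obtain ⟨R, hR⟩ := hKC.isBounded.exists_norm_le
  have hxbound : ∀ x : Fin (n + 2) → ℝ, StrictMono x → E x ≤ c → ∀ i, |x i| ≤ R := by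
    intro x hx hxc i
    have h1 := hVxle x hx hxc i
    by_cases h2 : x i ∈ KC
    · simpa [Real.norm_eq_abs] using hR (x i) h2
    · exfalso
      have h3 := hKCs h2
      simp only [Set.mem_setOf_eq] at h3
      linarith
  set KS : Set (Fin (n + 2) → ℝ) :=
    {x | (∀ i, x i ∈ Set.Icc (-R) R) ∧ ∀ i j : Fin (n + 2), i < j → ε ≤ x j - x i}
    with hKSdef
  have hKS_SM : ∀ x ∈ KS, StrictMono x := by
    intro x hx i j hij
    have := hx.2 i j hij
    linarith [hε0]
  have hKS_closed : IsClosed KS := by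
    have heq : KS = (⋂ i, (fun x : Fin (n + 2) → ℝ => x i) ⁻¹' Set.Icc (-R) R) ∩
        ⋂ i, ⋂ j, {x : Fin (n + 2) → ℝ | i < j → ε ≤ x j - x i} := by
      ext x
      simp only [hKSdef, Set.mem_setOf_eq, Set.mem_inter_iff, Set.mem_iInter,
        Set.mem_preimage]
    rw [heq]
    refine IsClosed.inter (isClosed_iInter fun i => isClosed_Icc.preimage (continuous_apply i))
      (isClosed_iInter fun i => isClosed_iInter fun j => ?_)
    by_cases hij : i < j
    · have heq2 : {x : Fin (n + 2) → ℝ | i < j → ε ≤ x j - x i}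
          = (fun x : Fin (n + 2) → ℝ => x j - x i) ⁻¹' Set.Ici ε := by
        ext x; simp [hij]
      rw [heq2]
      exact isClosed_Ici.preimage ((continuous_apply j).sub (continuous_apply i))
    · have heq2 : {x : Fin (n + 2) → ℝ | i < j → ε ≤ x j - x i} = Set.univ := by
        ext x; simp [hij]
      rw [heq2]; exact isClosed_univ
  have hKS_compact : IsCompact KS := by
    refine IsCompact.of_isClosed_subset
      (isCompact_univ_pi fun _ : Fin (n + 2) => isCompact_Icc (a := -R) (b := R))
      hKS_closed ?_
    intro x hx i _
    exact hx.1 i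
  have hSinK : ∀ x : Fin (n + 2) → ℝ, StrictMono x → E x ≤ c → x ∈ KS := by
    intro x hx hxc
    refine ⟨fun i => ?_, fun i j hij => ?_⟩
    · exact Set.mem_Icc.mpr (abs_le.mp (hxbound x hx hxc i))
    · have h1 := hrlow x hx hxc i
      have h2 := rball_le_left hx hij
      linarith
  have hx0K : x0 ∈ KS := hSinK x0 hx0 le_rfl
  have hcont : ContinuousOn E KS := fun x hx =>
    (KSaux.energy_continuousAt w hw V hVcont χ (hKS_SM x hx)).continuousWithinAt
  obtain ⟨xstar, hxstarK, hmin⟩ := hKS_compact.exists_isMinOn ⟨x0, hx0K⟩ hcont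
  refine ⟨xstar, hKS_SM xstar hxstarK, ?_⟩
  intro x hxSM
  rcases le_or_gt (E x) c with h | h
  · exact hmin (hSinK x hxSM h)
  · exact (hmin hx0K).trans h.le
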